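/- If t > 0 satisfies t² · ∫_𝒟 y⁴|φ(z)|² dμ ≥ μ(𝒟), then every Γ-invariant C² solution u of the Gauss equation Δu + 1 − e^{2u} − t²y⁴|φ(z)|²e^{−2u} = 0 satisfies ∫_𝒟 (e^{2u} − t²y⁴|φ|²e^{−2u}) dμ < 0; in particular, taking the constant test function ξ ≡ 1, the stability quadratic form ∫_𝒟 y²|∇ξ|² dμ + 2∫_𝒟 (e^{2u} − t²y⁴|φ|²e^{−2u})ξ² dμ is negative, so the first eigenvalue of the linearized operator L = −Δ + 2(e^{2u} − t²y⁴|φ|²e^{−2u}) is negative at any solution. -/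

import Mathlib

open Complex MeasureTheory Real Filter
open Topology ENNReal

noncomputable section

/-- The upper half-plane, viewed as a subset of `ℂ`. -/
def UH : Set ℂ := {z : ℂ | 0 < z.im}

/-- The Möbius action of `SL(2, ℝ)` on the upper half-plane (as a map on `ℂ`). -/
def moebius (γ : Matrix.SpecialLinearGroup (Fin 2) ℝ) (z : ℂ) : ℂ :=
  (((γ 0 0 : ℝ) : ℂ) * z + ((γ 0 1 : ℝ) : ℂ)) / (((γ 1 0 : ℝ) : ℂ) * z + ((γ 1 1 : ℝ) : ℂ))

/-- The hyperbolic Laplacian `Δu = y² (∂²u/∂x² + ∂²u/∂y²)`. -/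
def hypLap (u : ℂ → ℝ) (z : ℂ) : ℝ :=
  z.im ^ 2 * (iteratedFDeriv ℝ 2 u z ![1, 1] + iteratedFDeriv ℝ 2 u z ![Complex.I, Complex.I])

/-- The squared Euclidean gradient `|∇u|² = (∂u/∂x)² + (∂u/∂y)²`. -/
def gradSq (u : ℂ → ℝ) (z : ℂ) : ℝ :=
  (fderiv ℝ u z 1) ^ 2 + (fderiv ℝ u z Complex.I) ^ 2

/-- `u` is invariant under the Möbius action of the subgroup `Γ` on the upper half-plane. -/
def GammaInv (Γ : Subgroup (Matrix.SpecialLinearGroup (Fin 2) ℝ)) (u : ℂ → ℝ) : Prop :=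
  ∀ γ ∈ Γ, ∀ z ∈ UH, u (moebius γ z) = u z

/-- The Gauss equation `Δu + 1 - e^{2u} - t² y⁴ |φ(z)|² e^{-2u} = 0` on the upper half-plane. -/
def GaussEq (φ : ℂ → ℂ) (t : ℝ) (u : ℂ → ℝ) : Prop :=
  ∀ z ∈ UH, hypLap u z + 1 - Real.exp (2 * u z)
    - t ^ 2 * z.im ^ 4 * ‖φ z‖ ^ 2 * Real.exp (-2 * u z) = 0

/-- Integral over a fundamental domain `D` with respect to the hyperbolic
area measure `dμ = y⁻² dx dy`. -/
def hInt (D : Set ℂ) (f : ℂ → ℝ) : ℝ := ∫ z in D, f z * (z.im ^ 2)⁻¹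

abbrev SL2R := Matrix.SpecialLinearGroup (Fin 2) ℝ

lemma sl2_det (g : SL2R) : g 0 0 * g 1 1 - g 0 1 * g 1 0 = 1 := by
  have h := g.2
  rw [Matrix.det_fin_two] at h
  exact h

lemma isOpen_UH : IsOpen UH := isOpen_lt continuous_const Complex.continuous_im

lemma denom_ne_zero (g : SL2R) {z : ℂ} (hz : z ∈ UH) :
    ((g 1 0 : ℝ) : ℂ) * z + ((g 1 1 : ℝ) : ℂ) ≠ 0 := by
  intro h
  rcases eq_or_ne (g 1 0) 0 with h0 | h0
  · rw [h0] at h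
    simp only [Complex.ofReal_zero, zero_mul, zero_add, Complex.ofReal_eq_zero] at h
    have := sl2_det g
    rw [h0, h] at this
    simp at this
  · have him := congrArg Complex.im h
    simp only [Complex.add_im, Complex.mul_im, Complex.ofReal_re, Complex.ofReal_im,
      Complex.zero_im, zero_mul, add_zero, mul_zero] at him
    have : z.im = 0 := by
      have : (g 1 0 : ℝ) * z.im = 0 := by linarith [him]
      rcases mul_eq_zero.mp this with h' | h'
      · exact absurd h' h0
      · exact h'
    have := hz
    simp only [UH, Set.mem_setOf_eq] at this
    linarith

lemma moebius_im (g : SL2R) {z : ℂ} (hz : z ∈ UH) :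
    (moebius g z).im
      = z.im / Complex.normSq (((g 1 0 : ℝ) : ℂ) * z + ((g 1 1 : ℝ) : ℂ)) := by
  have hd := denom_ne_zero g hz
  have hns : Complex.normSq (((g 1 0 : ℝ) : ℂ) * z + ((g 1 1 : ℝ) : ℂ)) ≠ 0 :=
    by simpa using Complex.normSq_pos.mpr hd |>.ne'
  rw [moebius, Complex.div_im, div_sub_div_same, div_eq_div_iff hns hns]
  simp only [Complex.add_im, Complex.add_re, Complex.mul_im, Complex.mul_re,
    Complex.ofReal_re, Complex.ofReal_im]
  ring_nf
  linear_combination (z.im * Complex.normSq ((((g : Matrix (Fin 2) (Fin 2) ℝ) 1 0 : ℝ) : ℂ) * z + (((g : Matrix (Fin 2) (Fin 2) ℝ) 1 1 : ℝ) : ℂ))) * (sl2_det g)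

lemma moebius_mem_UH (g : SL2R) {z : ℂ} (hz : z ∈ UH) : moebius g z ∈ UH := by
  have := moebius_im g hz
  have hd := denom_ne_zero g hz
  have hns : 0 < Complex.normSq (((g 1 0 : ℝ) : ℂ) * z + ((g 1 1 : ℝ) : ℂ)) :=
    Complex.normSq_pos.mpr hd
  have hzim : 0 < z.im := hz
  simp only [UH, Set.mem_setOf_eq, this]
  positivity

lemma sl2_inv_entries (g : SL2R) :
    (g⁻¹ 0 0 : ℝ) = g 1 1 ∧ (g⁻¹ 0 1 : ℝ) = -g 0 1 ∧
    (g⁻¹ 1 0 : ℝ) = -g 1 0 ∧ (g⁻¹ 1 1 : ℝ) = g 0 0 := by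
  rw [Matrix.SpecialLinearGroup.SL2_inv_expl]
  refine ⟨rfl, rfl, rfl, rfl⟩

lemma moebius_inv_left (g : SL2R) {z : ℂ} (hz : z ∈ UH) :
    moebius g⁻¹ (moebius g z) = z := by
  obtain ⟨e1, e2, e3, e4⟩ := sl2_inv_entries g
  have hw : moebius g z ∈ UH := moebius_mem_UH g hz
  have hd1 := denom_ne_zero g hz
  have hd2 := denom_ne_zero g⁻¹ hw
  set a : ℂ := ((g 0 0 : ℝ) : ℂ)
  set b : ℂ := ((g 0 1 : ℝ) : ℂ)
  set c : ℂ := ((g 1 0 : ℝ) : ℂ)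
  set d : ℂ := ((g 1 1 : ℝ) : ℂ)
  have hdet : a * d - b * c = 1 := by
    have := sl2_det g
    simp only [a, b, c, d]
    exact_mod_cast congrArg (fun x : ℝ => (x : ℂ)) this
  have ea : ((g⁻¹ 0 0 : ℝ) : ℂ) = d := by rw [e1]
  have eb : ((g⁻¹ 0 1 : ℝ) : ℂ) = -b := by rw [e2]; push_cast; ring
  have ec : ((g⁻¹ 1 0 : ℝ) : ℂ) = -c := by rw [e3]; push_cast; ring
  have ed : ((g⁻¹ 1 1 : ℝ) : ℂ) = a := by rw [e4]
  have hden : c * z + d ≠ 0 := hd1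
  have hd2' : -c * moebius g z + a ≠ 0 := by rwa [ec, ed] at hd2
  rw [moebius, ea, eb, ec, ed]
  rw [moebius] at hd2' ⊢
  have hnum : d * ((a * z + b) / (c * z + d)) + -b = z / (c * z + d) := by
    have hw : (a * z + b) / (c * z + d) * (c * z + d) = a * z + b := div_mul_cancel₀ _ hden
    rw [eq_div_iff hden]
    linear_combination d * hw + z * hdet
  have hden2 : -c * ((a * z + b) / (c * z + d)) + a = 1 / (c * z + d) := by
    field_simp
    linear_combination hdet
  rw [hnum, hden2, div_div_div_eq]
  rw [mul_one, mul_comm]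
  exact mul_div_cancel_left₀ z hden

lemma moebius_diffOn (g : SL2R) : DifferentiableOn ℝ (moebius g) UH := by
  intro z hz
  have hd : DifferentiableAt ℂ (moebius g) z := by
    have : moebius g = fun w =>
        (((g 0 0 : ℝ) : ℂ) * w + ((g 0 1 : ℝ) : ℂ)) /
        (((g 1 0 : ℝ) : ℂ) * w + ((g 1 1 : ℝ) : ℂ)) := rfl
    rw [this]
    exact DifferentiableAt.div (by fun_prop) (by fun_prop) (denom_ne_zero g hz)
  exact (hd.restrictScalars ℝ).differentiableWithinAt

lemma gamma_countable (Γ : Subgroup SL2R)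
    (hdisc : ∀ K : Set ℂ, K ⊆ UH → IsCompact K →
      {γ : SL2R | γ ∈ Γ ∧ ((moebius γ '' K) ∩ K).Nonempty}.Finite) :
    (Γ : Set SL2R).Countable := by
  have hKn : ∀ n : ℕ, IsCompact ({z : ℂ | ((n : ℝ) + 1)⁻¹ ≤ z.im} ∩ Metric.closedBall 0 ((n : ℝ) + 1))
      ∧ ({z : ℂ | ((n : ℝ) + 1)⁻¹ ≤ z.im} ∩ Metric.closedBall 0 ((n : ℝ) + 1)) ⊆ UH := by
    intro n
    constructor
    · exact (isCompact_closedBall 0 _).inter_left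
        (isClosed_le continuous_const Complex.continuous_im)
    · intro z hz
      have h1 : ((n : ℝ) + 1)⁻¹ ≤ z.im := hz.1
      have : (0 : ℝ) < ((n : ℝ) + 1)⁻¹ := by positivity
      exact lt_of_lt_of_le this h1
  have hsub : (Γ : Set SL2R) ⊆ ⋃ n : ℕ,
      {γ : SL2R | γ ∈ Γ ∧ ((moebius γ ''
        ({z : ℂ | ((n : ℝ) + 1)⁻¹ ≤ z.im} ∩ Metric.closedBall 0 ((n : ℝ) + 1))) ∩
        ({z : ℂ | ((n : ℝ) + 1)⁻¹ ≤ z.im} ∩ Metric.closedBall 0 ((n : ℝ) + 1))).Nonempty} := by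
    intro γ hγ
    have hI : Complex.I ∈ UH := by simp [UH]
    have hw : moebius γ Complex.I ∈ UH := moebius_mem_UH γ hI
    set w := moebius γ Complex.I with hwdef
    have hwim : 0 < w.im := hw
    obtain ⟨n, hn⟩ := exists_nat_ge (max (w.im)⁻¹ (max ‖w‖ 1))
    have hnn1 : (n : ℝ) ≤ (n : ℝ) + 1 := le_add_of_nonneg_right zero_le_one
    have hn1 : (w.im)⁻¹ ≤ (n : ℝ) + 1 := le_trans (le_max_left _ _) (hn.trans hnn1)
    have hn2 : ‖w‖ ≤ (n : ℝ) + 1 :=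
      le_trans (le_trans (le_max_left _ _) (le_max_right _ _)) (hn.trans hnn1)
    have hn3 : (1 : ℝ) ≤ (n : ℝ) + 1 :=
      le_trans (le_trans (le_max_right _ _) (le_max_right _ _)) (hn.trans hnn1)
    simp only [Set.mem_iUnion, Set.mem_setOf_eq]
    refine ⟨n, hγ, ⟨w, ?_, ?_⟩⟩
    · refine ⟨Complex.I, ⟨?_, ?_⟩, rfl⟩
      · simp only [Set.mem_setOf_eq, Complex.I_im]
        rw [inv_le_one_iff₀]; right; exact hn3
      · simpa [Complex.norm_I] using hn3
    · constructor
      · simp only [Set.mem_setOf_eq]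
        rw [inv_le_comm₀ (by positivity) hwim]
        · exact hn1
      · simpa [Metric.mem_closedBall, dist_zero_right] using hn2
  exact Set.Countable.mono hsub
    (Set.countable_iUnion (fun n => ((hdisc _ (hKn n).2 (hKn n).1).countable)))

lemma null_transport (Γ : Subgroup SL2R)
    (hdisc : ∀ K : Set ℂ, K ⊆ UH → IsCompact K →
      {γ : SL2R | γ ∈ Γ ∧ ((moebius γ '' K) ∩ K).Nonempty}.Finite)
    (N : Set ℂ) (hNsub : N ⊆ UH) (hN : volume N = 0)
    (T : Set ℂ) (hT : ∀ z ∈ T, z ∈ UH ∧ ∃ γ ∈ Γ, moebius γ z ∈ N) :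
    volume T = 0 := by
  have hcount := gamma_countable Γ hdisc
  have hsub : T ⊆ ⋃ γ ∈ (Γ : Set SL2R), moebius γ⁻¹ '' N := by
    intro z hz
    obtain ⟨hzUH, γ, hγ, hmem⟩ := hT z hz
    refine Set.mem_biUnion hγ ⟨moebius γ z, hmem, moebius_inv_left γ hzUH⟩
  refine measure_mono_null hsub ?_
  refine (measure_biUnion_null_iff hcount).mpr (fun γ _ => ?_)
  exact MeasureTheory.addHaar_image_eq_zero_of_differentiableOn_of_addHaar_eq_zero volume
    ((moebius_diffOn γ⁻¹).mono hNsub) hN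

lemma second_deriv_nonpos {u : ℂ → ℝ} (hu : ContDiffOn ℝ 2 u UH) {z₀ : ℂ} (hz : z₀ ∈ UH)
    (hmax : ∀ z ∈ UH, u z ≤ u z₀) (v : ℂ) :
    fderiv ℝ (fderiv ℝ u) z₀ v v ≤ 0 := by
  by_contra hc
  push_neg at hc
  have hu2 : ∀ z ∈ UH, ContDiffAt ℝ 2 u z := fun z hz' => hu.contDiffAt (isOpen_UH.mem_nhds hz')
  have hdiff : ∀ z ∈ UH, DifferentiableAt ℝ u z := fun z hz' =>
    (hu2 z hz').differentiableAt (by norm_num)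
  have hF : DifferentiableAt ℝ (fderiv ℝ u) z₀ :=
    ((hu2 z₀ hz).fderiv_right (m := 1) (by norm_num)).differentiableAt (by norm_num)
  have hline : ∀ s : ℝ, HasDerivAt (fun r : ℝ => z₀ + r • v) v s := by
    intro s
    simpa using ((hasDerivAt_id s).smul_const v).const_add z₀
  obtain ⟨ε, hε, hball⟩ := Metric.isOpen_iff.mp isOpen_UH z₀ hz
  set δ : ℝ := ε / (‖v‖ + 1) with hδdef
  have hδ : 0 < δ := by positivity
  have memUH : ∀ s : ℝ, |s| < δ → z₀ + s • v ∈ UH := by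
    intro s hs
    apply hball
    rw [Metric.mem_ball, dist_eq_norm]
    have : z₀ + s • v - z₀ = s • v := by ring
    rw [this, norm_smul, Real.norm_eq_abs]
    calc |s| * ‖v‖ ≤ |s| * (‖v‖ + 1) := by
            exact mul_le_mul_of_nonneg_left (by linarith) (abs_nonneg s)
      _ < δ * (‖v‖ + 1) := by
            exact mul_lt_mul_of_pos_right hs (by positivity)
      _ = ε := by rw [hδdef, div_mul_cancel₀ _ (by positivity)]
  set g : ℝ → ℝ := fun r => u (z₀ + r • v) with hgdef
  set h : ℝ → ℝ := fun r => fderiv ℝ u (z₀ + r • v) v with hhdef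
  have gderiv : ∀ s : ℝ, z₀ + s • v ∈ UH → HasDerivAt g (h s) s := fun s hs =>
    (hdiff _ hs).hasFDerivAt.comp_hasDerivAt s (hline s)
  have h0pt : z₀ + (0 : ℝ) • v = z₀ := by simp
  have hF' : HasFDerivAt (fderiv ℝ u) (fderiv ℝ (fderiv ℝ u) z₀) (z₀ + (0 : ℝ) • v) := by
    rw [h0pt]; exact hF.hasFDerivAt
  have H : HasDerivAt (fun s : ℝ => fderiv ℝ u (z₀ + s • v)) (fderiv ℝ (fderiv ℝ u) z₀ v) 0 :=
    hF'.comp_hasDerivAt 0 (hline 0)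
  have hd0 : HasDerivAt h (fderiv ℝ (fderiv ℝ u) z₀ v v) 0 := by
    have := H.clm_apply (hasDerivAt_const (0 : ℝ) v)
    rwa [map_zero, add_zero] at this
  -- local max of g at 0
  have hloc : ∀ s : ℝ, |s| < δ → g s ≤ g 0 := by
    intro s hs
    have : g 0 = u z₀ := by simp [hgdef]
    rw [this]
    exact hmax _ (memUH s hs)
  have hg0max : IsLocalMax g 0 := by
    have hev : ∀ᶠ s in 𝓝 (0 : ℝ), |s| < δ := by
      have := Metric.ball_mem_nhds (0 : ℝ) hδ
      filter_upwards [this] with s hs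
      simpa [Real.dist_eq] using hs
    filter_upwards [hev] with s hs using hloc s hs
  have h0 : h 0 = 0 := by
    have hder0 : HasDerivAt g (h 0) 0 := gderiv 0 (by rw [h0pt]; exact hz)
    have := hg0max.deriv_eq_zero
    rwa [hder0.deriv] at this
  -- slope positivity
  have hslope := hasDerivAt_iff_tendsto_slope.mp hd0
  have hev : ∀ᶠ s in 𝓝[≠] (0 : ℝ), 0 < slope h 0 s := hslope.eventually (lt_mem_nhds hc)
  rw [eventually_nhdsWithin_iff] at hev
  obtain ⟨δ₁, hδ₁, hs1⟩ := Metric.eventually_nhds_iff.mp hev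
  have hpos' : ∀ s : ℝ, 0 < s → s < δ₁ → 0 < h s := by
    intro s h1 h2
    have := hs1 (y := s) (by simpa [Real.dist_eq, _root_.abs_of_pos h1] using h2) (by simp [ne_of_gt h1])
    rw [slope_def_field] at this
    have hq : 0 < (h s - h 0) / (s - 0) := this
    rw [h0, sub_zero, sub_zero] at hq
    exact (div_pos_iff.mp hq).resolve_right (fun ⟨_, h'⟩ => absurd h1 (not_lt.mpr h'.le)) |>.1
  set s₁ : ℝ := min δ δ₁ / 2 with hs₁def
  have hs₁pos : 0 < s₁ := by positivity
  have hs₁δ : s₁ < δ := by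
    have := min_le_left δ δ₁; simp only [hs₁def]; linarith
  have hs₁δ₁ : s₁ < δ₁ := by
    have := min_le_right δ δ₁; simp only [hs₁def]; linarith
  have hmono : StrictMonoOn g (Set.Icc 0 s₁) := by
    apply strictMonoOn_of_hasDerivWithinAt_pos (convex_Icc 0 s₁) (f' := h)
    · intro x hx
      have hxd : |x| < δ := by
        rw [_root_.abs_of_nonneg hx.1]
        exact lt_of_le_of_lt hx.2 hs₁δ
      exact ((gderiv x (memUH x hxd)).continuousAt).continuousWithinAt
    · intro x hx
      rw [interior_Icc] at hx
      have hxd : |x| < δ := by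
        rw [_root_.abs_of_pos hx.1]
        exact lt_trans hx.2 hs₁δ
      exact ((gderiv x (memUH x hxd)).hasDerivWithinAt)
    · intro x hx
      rw [interior_Icc] at hx
      exact hpos' x hx.1 (lt_trans hx.2 hs₁δ₁)
  have hlt : g 0 < g s₁ :=
    hmono (Set.left_mem_Icc.mpr hs₁pos.le) (Set.right_mem_Icc.mpr hs₁pos.le) hs₁pos
  have : g s₁ ≤ g 0 := hloc s₁ (by rw [_root_.abs_of_pos hs₁pos]; exact hs₁δ)
  linarith


theorem instability_for_large_t
    (Γ : Subgroup (Matrix.SpecialLinearGroup (Fin 2) ℝ))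
    (hfree : ∀ γ ∈ Γ, γ ≠ 1 → ∀ z ∈ UH, moebius γ z ≠ z)
    (hdisc : ∀ K : Set ℂ, K ⊆ UH → IsCompact K →
      {γ : Matrix.SpecialLinearGroup (Fin 2) ℝ | γ ∈ Γ ∧ ((moebius γ '' K) ∩ K).Nonempty}.Finite)
    (hcocompact : ∃ K : Set ℂ, K ⊆ UH ∧ IsCompact K ∧ ∀ z ∈ UH, ∃ γ ∈ Γ, moebius γ z ∈ K)
    (φ : ℂ → ℂ) (hφ : DifferentiableOn ℂ φ UH)
    (hφeq : ∀ γ ∈ Γ, ∀ z ∈ UH,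
      φ (moebius γ z) = (((γ 1 0 : ℝ) : ℂ) * z + ((γ 1 1 : ℝ) : ℂ)) ^ 4 * φ z)
    (D : Set ℂ) (hDmeas : MeasurableSet D) (hDsub : D ⊆ UH)
    (hDfund : ∀ z ∈ UH, ∃ γ ∈ Γ, moebius γ z ∈ D)
    (hDfin : IntegrableOn (fun z => (z.im ^ 2)⁻¹) D volume)
    (t : ℝ) (ht : 0 < t)
    (hlarge : hInt D (fun _ => 1)
      ≤ t ^ 2 * hInt D (fun z => z.im ^ 4 * ‖φ z‖ ^ 2))
    (u : ℂ → ℝ) (hu : ContDiffOn ℝ 2 u UH) (huinv : GammaInv Γ u)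
    (hgauss : GaussEq φ t u) :
    hInt D (fun z => Real.exp (2 * u z) - t ^ 2 * z.im ^ 4 * ‖φ z‖ ^ 2 * Real.exp (-2 * u z)) < 0
    ∧ hInt D (fun z => z.im ^ 2 * gradSq (fun _ => (1 : ℝ)) z)
        + 2 * hInt D (fun z =>
            (Real.exp (2 * u z) - t ^ 2 * z.im ^ 4 * ‖φ z‖ ^ 2 * Real.exp (-2 * u z)) * (1 : ℝ) ^ 2) < 0 := by
  -- basic facts
  have hI : Complex.I ∈ UH := by simp [UH]
  -- volume of D is positive
  have hDvol : volume D ≠ 0 := by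
    intro hDv
    have hnull : volume UH = 0 :=
      null_transport Γ hdisc D hDsub hDv UH (fun z hz => ⟨hz, hDfund z hz⟩)
    exact (isOpen_UH.measure_pos volume ⟨Complex.I, hI⟩).ne' hnull
  -- positivity of P = ∫_D (im z)⁻²
  set inv2 : ℂ → ℝ := fun z => (z.im ^ 2)⁻¹ with hinv2def
  have hinv2pos : ∀ z ∈ UH, 0 < inv2 z := by
    intro z hz
    have : (0:ℝ) < z.im := hz
    positivity
  have hP : 0 < ∫ z in D, inv2 z := by
    have hnn2 : 0 ≤ᵐ[volume.restrict D] inv2 :=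
      Filter.Eventually.of_forall (fun z => inv_nonneg.mpr (sq_nonneg z.im))
    rw [integral_pos_iff_support_of_nonneg_ae hnn2 hDfin]
    have hsup : D ⊆ Function.support inv2 := by
      intro z hz
      exact (hinv2pos z (hDsub hz)).ne'
    calc (0:ℝ≥0∞) < volume D := hDvol.bot_lt
      _ = volume (Function.support inv2 ∩ D) := by
          rw [Set.inter_eq_self_of_subset_right hsup]
      _ = (volume.restrict D) (Function.support inv2) := by
          rw [Measure.restrict_apply' hDmeas]
  -- extrema of u
  obtain ⟨K, hKsub, hKcomp, hKcover⟩ := hcocompact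
  have hKne : K.Nonempty := by
    obtain ⟨γ, _, hm⟩ := hKcover Complex.I hI
    exact ⟨_, hm⟩
  obtain ⟨z₀, hz₀K, hz₀max⟩ := hKcomp.exists_isMaxOn hKne (hu.continuousOn.mono hKsub)
  obtain ⟨z₁, hz₁K, hz₁min⟩ := hKcomp.exists_isMinOn hKne (hu.continuousOn.mono hKsub)
  have hz₀UH : z₀ ∈ UH := hKsub hz₀K
  have hz₁UH : z₁ ∈ UH := hKsub hz₁K
  have hmax : ∀ z ∈ UH, u z ≤ u z₀ := by
    intro z hz
    obtain ⟨γ, hγ, hm⟩ := hKcover z hz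
    rw [← huinv γ hγ z hz]
    exact hz₀max hm
  have hmin : ∀ z ∈ UH, u z₁ ≤ u z := by
    intro z hz
    obtain ⟨γ, hγ, hm⟩ := hKcover z hz
    rw [← huinv γ hγ z hz]
    exact hz₁min hm
  -- hyperbolic Laplacian at the max point is nonpositive
  have hL : hypLap u z₀ ≤ 0 := by
    have h1 : iteratedFDeriv ℝ 2 u z₀ ![1, 1] ≤ 0 := by
      rw [iteratedFDeriv_two_apply]
      simpa using second_deriv_nonpos hu hz₀UH hmax 1
    have h2 : iteratedFDeriv ℝ 2 u z₀ ![Complex.I, Complex.I] ≤ 0 := by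
      rw [iteratedFDeriv_two_apply]
      simpa using second_deriv_nonpos hu hz₀UH hmax Complex.I
    exact mul_nonpos_of_nonneg_of_nonpos (sq_nonneg _) (by linarith)
  -- u z₀ ≤ 0
  have hM : u z₀ ≤ 0 := by
    have hg := hgauss z₀ hz₀UH
    have hq : 0 ≤ t ^ 2 * z₀.im ^ 4 * ‖φ z₀‖ ^ 2 * Real.exp (-2 * u z₀) := by
      positivity
    have hexp : Real.exp (2 * u z₀) ≤ 1 := by linarith
    have := Real.exp_le_one_iff.mp hexp
    linarith
  have hunonpos : ∀ z ∈ UH, u z ≤ 0 := fun z hz => le_trans (hmax z hz) hM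
  -- continuity facts
  have him : ContinuousOn inv2 UH := by
    apply ContinuousOn.inv₀ (by fun_prop)
    intro z hz
    have h0 : (0:ℝ) < z.im := hz
    positivity
  have hUcont : ContinuousOn u UH := hu.continuousOn
  have hφcont : ContinuousOn φ UH := hφ.continuousOn
  set fE : ℂ → ℝ := fun z => Real.exp (2 * u z) * inv2 z with hfEdef
  set fQ : ℂ → ℝ := fun z => z.im ^ 4 * ‖φ z‖ ^ 2 * inv2 z with hfQdef
  set fQe : ℂ → ℝ := fun z => z.im ^ 4 * ‖φ z‖ ^ 2 * Real.exp (-2 * u z) * inv2 z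
    with hfQedef
  have hfEcont : ContinuousOn fE UH :=
    (Real.continuous_exp.comp_continuousOn (continuousOn_const.mul hUcont)).mul him
  have habs : ContinuousOn (fun z => ‖φ z‖ ^ 2) UH :=
    (continuous_norm.comp_continuousOn hφcont).pow 2
  have hfQcont : ContinuousOn fQ UH :=
    (((Complex.continuous_im.pow 4).continuousOn).mul habs).mul him
  have hfQecont : ContinuousOn fQe UH :=
    ((((Complex.continuous_im.pow 4).continuousOn).mul habs).mul
      (Real.continuous_exp.comp_continuousOn (continuousOn_const.mul hUcont))).mul him
  -- the key quantities
  have hInt1 : hInt D (fun _ => 1) = ∫ z in D, inv2 z := by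
    simp only [hInt, one_mul, hinv2def]
  have hIntQ : hInt D (fun z => z.im ^ 4 * ‖φ z‖ ^ 2) = ∫ z in D, fQ z := rfl
  -- integrability of fQ (otherwise hlarge is contradictory)
  by_cases hQint : IntegrableOn fQ D volume
  swap
  · exfalso
    rw [hInt1, hIntQ, integral_undef hQint, mul_zero] at hlarge
    linarith
  -- integrability of the other integrands
  have hmexp : ∀ z ∈ D, Real.exp (2 * u z) ≤ 1 := by
    intro z hz
    exact Real.exp_le_one_iff.mpr (by linarith [hunonpos z (hDsub hz)])
  have hE_int : IntegrableOn fE D volume := by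
    apply Integrable.mono' hDfin
      ((hfEcont.mono hDsub).aestronglyMeasurable hDmeas)
    filter_upwards [ae_restrict_mem hDmeas] with z hz
    have h1 := hmexp z hz
    have h2 := hinv2pos z (hDsub hz)
    rw [Real.norm_eq_abs, _root_.abs_of_nonneg (by positivity)]
    calc Real.exp (2 * u z) * inv2 z ≤ 1 * inv2 z := by
          exact mul_le_mul_of_nonneg_right h1 h2.le
      _ = inv2 z := one_mul _
  have hQe_int : IntegrableOn fQe D volume := by
    apply Integrable.mono' (hQint.const_mul (Real.exp (-2 * u z₁)))
      ((hfQecont.mono hDsub).aestronglyMeasurable hDmeas)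
    filter_upwards [ae_restrict_mem hDmeas] with z hz
    have h2 := hinv2pos z (hDsub hz)
    have h3 : Real.exp (-2 * u z) ≤ Real.exp (-2 * u z₁) :=
      Real.exp_le_exp.mpr (by linarith [hmin z (hDsub hz)])
    have h4 : (0:ℝ) ≤ z.im ^ 4 * ‖φ z‖ ^ 2 * inv2 z := by positivity
    rw [Real.norm_eq_abs, _root_.abs_of_nonneg (by positivity)]
    calc z.im ^ 4 * ‖φ z‖ ^ 2 * Real.exp (-2 * u z) * inv2 z
        = (z.im ^ 4 * ‖φ z‖ ^ 2 * inv2 z) * Real.exp (-2 * u z) := by ring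
      _ ≤ (z.im ^ 4 * ‖φ z‖ ^ 2 * inv2 z) * Real.exp (-2 * u z₁) :=
          mul_le_mul_of_nonneg_left h3 h4
      _ = Real.exp (-2 * u z₁) * fQ z := by rw [hfQdef]; ring
  -- the main integral splits
  set A := ∫ z in D, fE z with hAdef
  set Bq := ∫ z in D, fQ z with hBqdef
  set Be := ∫ z in D, fQe z with hBedef
  set P := ∫ z in D, inv2 z with hPdef
  have hsplit : hInt D (fun z => Real.exp (2 * u z)
      - t ^ 2 * z.im ^ 4 * ‖φ z‖ ^ 2 * Real.exp (-2 * u z)) = A - t ^ 2 * Be := by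
    have : (fun z => (Real.exp (2 * u z)
        - t ^ 2 * z.im ^ 4 * ‖φ z‖ ^ 2 * Real.exp (-2 * u z)) * (z.im ^ 2)⁻¹)
        = fun z => fE z - t ^ 2 * fQe z := by
      funext z
      simp only [hfEdef, hfQedef, hinv2def]
      ring
    rw [hInt, this, integral_sub hE_int (hQe_int.const_mul (t ^ 2)), integral_const_mul]
  have hlarge' : P ≤ t ^ 2 * Bq := by rwa [hInt1, hIntQ] at hlarge
  have hBe_ge : Bq ≤ Be := by
    apply setIntegral_mono_on hQint hQe_int hDmeas
    intro z hz
    have h1 : 1 ≤ Real.exp (-2 * u z) :=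
      Real.one_le_exp (by linarith [hunonpos z (hDsub hz)])
    have h4 : (0:ℝ) ≤ z.im ^ 4 * ‖φ z‖ ^ 2 * inv2 z := by
      have := hinv2pos z (hDsub hz); positivity
    calc fQ z = (z.im ^ 4 * ‖φ z‖ ^ 2 * inv2 z) * 1 := by
          rw [hfQdef]; ring
      _ ≤ (z.im ^ 4 * ‖φ z‖ ^ 2 * inv2 z) * Real.exp (-2 * u z) :=
          mul_le_mul_of_nonneg_left h1 h4
      _ = fQe z := by rw [hfQedef]; ring
  -- the main inequality
  have hmain : A - t ^ 2 * Be < 0 := by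
    rcases lt_or_eq_of_le hM with hMlt | hM0
    · -- strict max below zero
      have hA : A ≤ Real.exp (2 * u z₀) * P := by
        rw [hPdef, ← integral_const_mul]
        apply setIntegral_mono_on hE_int (hDfin.const_mul _) hDmeas
        intro z hz
        exact mul_le_mul_of_nonneg_right
          (Real.exp_le_exp.mpr (by linarith [hmax z (hDsub hz)]))
          (hinv2pos z (hDsub hz)).le
      have hexp1 : Real.exp (2 * u z₀) < 1 := by
        rw [Real.exp_lt_one_iff]; linarith
      have hBe' : t ^ 2 * Bq ≤ t ^ 2 * Be := mul_le_mul_of_nonneg_left hBe_ge (sq_nonneg t)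
      nlinarith
    · -- max equal to zero: derive a contradiction from equality case
      by_contra hcon
      rw [not_lt] at hcon
      have hA_le : A ≤ P := by
        apply setIntegral_mono_on hE_int hDfin hDmeas
        intro z hz
        have h1 := hmexp z hz
        have h2 := (hinv2pos z (hDsub hz)).le
        calc fE z = Real.exp (2 * u z) * inv2 z := rfl
          _ ≤ 1 * inv2 z := mul_le_mul_of_nonneg_right h1 h2
          _ = inv2 z := one_mul _
      have hBe' : t ^ 2 * Bq ≤ t ^ 2 * Be := mul_le_mul_of_nonneg_left hBe_ge (sq_nonneg t)
      have hint0 : ∫ z in D, (inv2 z - fE z) = 0 := by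
        rw [integral_sub hDfin hE_int]
        rw [← hPdef, ← hAdef]
        linarith
      have hnn : 0 ≤ᵐ[volume.restrict D] fun z => inv2 z - fE z := by
        filter_upwards [ae_restrict_mem hDmeas] with z hz
        have h1 := hmexp z hz
        have h2 := (hinv2pos z (hDsub hz)).le
        simp only [Pi.zero_apply, hfEdef]
        nlinarith
      have hae := (integral_eq_zero_iff_of_nonneg_ae hnn (hDfin.sub hE_int)).mp hint0
      have hu0 : ∀ᵐ z ∂(volume.restrict D), u z = 0 := by
        filter_upwards [hae, ae_restrict_mem hDmeas] with z h1 h2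
        have h3 := hinv2pos z (hDsub h2)
        have h4 : (1 - Real.exp (2 * u z)) * inv2 z = 0 := by
          have h5 : inv2 z - fE z = 0 := h1
          simp only [hfEdef] at h5
          linarith [h5]
        rcases mul_eq_zero.mp h4 with h5 | h5
        · have h6 : Real.exp (2 * u z) = Real.exp 0 := by rw [Real.exp_zero]; linarith
          have := Real.exp_eq_exp.mp h6
          linarith
        · exact absurd h5 h3.ne'
      have hN : volume ({z : ℂ | u z ≠ 0} ∩ D) = 0 := by
        rw [← Measure.restrict_apply' hDmeas]
        exact ae_iff.mp hu0
      have hTnull : volume {z : ℂ | z ∈ UH ∧ u z ≠ 0} = 0 := by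
        apply null_transport Γ hdisc _ (fun z hz => hDsub hz.2) hN
        intro z hz
        refine ⟨hz.1, ?_⟩
        obtain ⟨γ, hγ, hm⟩ := hDfund z hz.1
        refine ⟨γ, hγ, ⟨?_, hm⟩⟩
        show u (moebius γ z) ≠ 0
        rw [huinv γ hγ z hz.1]
        exact hz.2
      have hu0all : ∀ z ∈ UH, u z = 0 := by
        intro z hz
        by_contra hne
        have hca : ContinuousAt u z := hUcont.continuousAt (isOpen_UH.mem_nhds hz)
        have hev1 : ∀ᶠ w in 𝓝 z, u w ≠ 0 := hca.eventually_ne hne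
        have hev2 : ∀ᶠ w in 𝓝 z, w ∈ UH := isOpen_UH.mem_nhds hz
        obtain ⟨ε, hε, hb⟩ := Metric.eventually_nhds_iff.mp (hev2.and hev1)
        have hsub' : Metric.ball z ε ⊆ {w : ℂ | w ∈ UH ∧ u w ≠ 0} := by
          intro w hw
          exact hb (by rwa [Metric.mem_ball] at hw)
        have hle := measure_mono (μ := (volume : Measure ℂ)) hsub'
        rw [hTnull] at hle
        exact absurd (le_antisymm hle zero_le) (Metric.measure_ball_pos (volume : Measure ℂ) z hε).ne'
      have hφ0 : ∀ z ∈ UH, ‖φ z‖ ^ 2 = 0 := by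
        intro z hz
        have hev : u =ᶠ[𝓝 z] fun _ => (0 : ℝ) := by
          filter_upwards [isOpen_UH.mem_nhds hz] with w hw using hu0all w hw
        have h2 : iteratedFDeriv ℝ 2 u z = iteratedFDeriv ℝ 2 (fun _ => (0 : ℝ)) z := by
          rw [← iteratedFDerivWithin_univ, ← iteratedFDerivWithin_univ]
          apply Filter.EventuallyEq.iteratedFDerivWithin_eq _ (hu0all z hz)
          rw [nhdsWithin_univ]
          exact hev
        have hlap : hypLap u z = 0 := by
          rw [hypLap, h2]
          simp [iteratedFDeriv_zero_fun]
        have hg := hgauss z hz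
        rw [hlap, hu0all z hz] at hg
        norm_num [Real.exp_zero] at hg
        rcases hg with (h | h) | h
        · exact absurd h (ne_of_gt ht)
        · exact absurd h (ne_of_gt (hz : (0:ℝ) < z.im))
        · simp [h]
      have hBq0 : Bq = 0 := by
        rw [hBqdef]
        rw [setIntegral_congr_fun hDmeas (g := fun _ => (0 : ℝ))
          (fun z hz => by simp [hfQdef, hφ0 z (hDsub hz)])]
        exact integral_zero _ _
      rw [hBq0, mul_zero] at hlarge'
      linarith
  constructor
  · rw [hsplit]
    exact hmain
  · have h1 : hInt D (fun z => z.im ^ 2 * gradSq (fun _ => (1 : ℝ)) z) = 0 := by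
      have : (fun z : ℂ => z.im ^ 2 * gradSq (fun _ => (1 : ℝ)) z * (z.im ^ 2)⁻¹)
          = fun _ : ℂ => (0 : ℝ) := by
        funext z
        simp [gradSq]
      rw [hInt, this]
      exact integral_zero _ _
    have h2 : hInt D (fun z =>
        (Real.exp (2 * u z) - t ^ 2 * z.im ^ 4 * ‖φ z‖ ^ 2 * Real.exp (-2 * u z))
          * (1 : ℝ) ^ 2)
        = hInt D (fun z => Real.exp (2 * u z)
          - t ^ 2 * z.im ^ 4 * ‖φ z‖ ^ 2 * Real.exp (-2 * u z)) := by
      simp only [one_pow, mul_one]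
    rw [h1, h2, hsplit]
    linarith


end
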